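/- arXiv:1306.0108 — 2 statements merged into one kernel-verified Lean document; each statement's English description precedes it below -/
import Mathlib

section
/- Let I and J be ideals of a ring R. Then the following are equivalent: (1) both R/I and R/J are strongly P-clean; (2) R/(IJ) is strongly P-clean; (3) R/(I ∩ J) is strongly P-clean. -/
/-- An element `a` of a ring is strongly nilpotent if every sequence
`a = a₀, a₁, a₂, …` with `a_{i+1} ∈ a_i R a_i` is eventually zero. -/
def IsStronglyNilpotent {R : Type*} [Ring R] (a : R) : Prop :=
  ∀ f : ℕ → R, f 0 = a → (∀ i, ∃ r : R, f (i + 1) = f i * r * f i) → ∃ n, f n = 0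

/-- The prime radical `P(R)`: the set of strongly nilpotent elements
(equivalently, the intersection of all prime ideals). -/
def primeRadical (R : Type*) [Ring R] : Set R :=
  {a | IsStronglyNilpotent a}

/-- An element is strongly P-clean if it is the sum of an idempotent and an
element of the prime radical that commute. -/
def IsStronglyPClean {R : Type*} [Ring R] (x : R) : Prop :=
  ∃ e w : R, IsIdempotentElem e ∧ w ∈ primeRadical R ∧ x = e + w ∧ e * w = w * e

/-- A ring is strongly P-clean if each of its elements is strongly P-clean. -/
def StronglyPCleanRing (R : Type*) [Ring R] : Prop :=
  ∀ x : R, IsStronglyPClean x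
/-- The product of two two-sided ideals: the two-sided ideal generated by
products `a * b` with `a ∈ I`, `b ∈ J`. -/
def TwoSidedIdeal.idealMul {R : Type*} [Ring R] (I J : TwoSidedIdeal R) :
    TwoSidedIdeal R :=
  TwoSidedIdeal.span {x | ∃ a ∈ I, ∃ b ∈ J, x = a * b}

open Polynomial Function

section Aux
variable {R : Type*} [Ring R] {a : R}

lemma IsStronglyNilpotent.mul_right (ha : IsStronglyNilpotent a) (c : R) :
    IsStronglyNilpotent (a * c) := by
  intro f hf0 hrec
  choose r hr using hrec
  set g : ℕ → R := fun n => Nat.rec a (fun i gi => gi * (c * r i) * gi) n with hg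
  have key : ∀ i, f i = g i * c := by
    intro i
    induction i with
    | zero => exact hf0
    | succ i ih =>
      rw [hr i, ih]
      show _ = g i * (c * r i) * g i * c
      simp [mul_assoc]
  obtain ⟨n, hn⟩ := ha g rfl (fun i => ⟨c * r i, rfl⟩)
  exact ⟨n, by rw [key n, hn, zero_mul]⟩

lemma IsStronglyNilpotent.map {S : Type*} [Ring S] (ha : IsStronglyNilpotent a)
    (f : R →+* S) (hf : Surjective f) : IsStronglyNilpotent (f a) := by
  intro h h0 hrec
  choose s hs using hrec
  choose r hr using fun i => hf (s i)
  set g : ℕ → R := fun n => Nat.rec a (fun i gi => gi * r i * gi) n with hg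
  have key : ∀ i, f (g i) = h i := by
    intro i
    induction i with
    | zero => exact h0.symm
    | succ i ih =>
      show f (g i * r i * g i) = _
      rw [map_mul, map_mul, ih, hr i, ← hs i]
  obtain ⟨n, hn⟩ := ha g rfl (fun i => ⟨r i, rfl⟩)
  exact ⟨n, by rw [← key n, hn, map_zero]⟩

lemma StronglyPCleanRing.of_surjective {S : Type*} [Ring S] (f : R →+* S)
    (hf : Surjective f) (h : StronglyPCleanRing R) : StronglyPCleanRing S := by
  intro x
  obtain ⟨y, rfl⟩ := hf x
  obtain ⟨e, w, he, hw, hsum, hcomm⟩ := h y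
  refine ⟨f e, f w, ?_, hw.map f hf, by rw [hsum, map_add], ?_⟩
  · show f e * f e = f e
    rw [← map_mul, he]
  · rw [← map_mul, ← map_mul, hcomm]

end Aux

/-- The Newton iteration `p ↦ 3p² - 2p³` starting from `X`, used to lift
idempotents modulo nil(potent) elements. -/
noncomputable def pSeq : ℕ → ℤ[X] := fun n => Nat.rec X (fun _ q => 3*q^2 - 2*q^3) n

lemma pSeq_dvd1 (k : ℕ) : (X - X^2 : ℤ[X])^(2^k) ∣ pSeq k - (pSeq k)^2 := by
  induction k with
  | zero => simp [pSeq]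
  | succ k ih =>
    have h1 : pSeq (k+1) - (pSeq (k+1))^2
        = (pSeq k - (pSeq k)^2)^2 * (3 + 4*(pSeq k) - 4*(pSeq k)^2) := by
      show (3*(pSeq k)^2 - 2*(pSeq k)^3) - (3*(pSeq k)^2 - 2*(pSeq k)^3)^2 = _
      ring
    have h2 : (X - X^2 : ℤ[X])^(2^(k+1)) = ((X - X^2 : ℤ[X])^(2^k))^2 := by
      rw [← pow_mul]
      congr 1
    rw [h1, h2]
    exact Dvd.dvd.mul_right (pow_dvd_pow_of_dvd ih 2) _

lemma pSeq_dvd2 (k : ℕ) : (X - X^2 : ℤ[X]) ∣ pSeq k - X := by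
  induction k with
  | zero => simp [pSeq]
  | succ k ih =>
    have h1 : pSeq (k+1) - X = (pSeq k - X) + (pSeq k - (pSeq k)^2) * (2*(pSeq k) - 1) := by
      show (3*(pSeq k)^2 - 2*(pSeq k)^3) - X = _
      ring
    rw [h1]
    exact dvd_add ih (Dvd.dvd.mul_right
      ((dvd_pow_self _ (Nat.two_pow_pos k).ne').trans (pSeq_dvd1 k)) _)

/-- Idempotent lifting: if `x - x²` is strongly nilpotent, then `x` is strongly
P-clean. -/
lemma isStronglyPClean_of_isStronglyNilpotent_sub_sq {R : Type*} [Ring R] {x : R}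
    (ha : IsStronglyNilpotent (x - x * x)) : IsStronglyPClean x := by
  set a := x - x * x with ha'
  -- `a` is nilpotent
  have hnil : ∃ n, a ^ 2 ^ n = 0 := by
    refine ha (fun i => a ^ 2 ^ i) (by simp) (fun i => ⟨1, ?_⟩)
    show a ^ 2 ^ (i + 1) = a ^ 2 ^ i * 1 * a ^ 2 ^ i
    rw [mul_one, ← pow_add, pow_succ, mul_two]
  obtain ⟨n, hn⟩ := hnil
  set e : R := aeval x (pSeq n) with he'
  have haX : (aeval x) (X - X ^ 2 : ℤ[X]) = a := by
    simp [ha', sq]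
  -- e is idempotent
  have he : e * e = e := by
    obtain ⟨c, hc⟩ := pSeq_dvd1 n
    have h3 := congrArg (aeval x) hc
    rw [map_sub, map_mul, map_pow, map_pow, haX, hn, zero_mul, sub_eq_zero] at h3
    show aeval x (pSeq n) * aeval x (pSeq n) = aeval x (pSeq n)
    rw [← pow_two, ← h3]
  -- w := x - e is strongly nilpotent
  obtain ⟨q, hq⟩ := pSeq_dvd2 n
  have hw : x - e = a * (- aeval x q) := by
    have := congrArg (aeval x) hq
    rw [map_sub, map_mul, haX, aeval_X] at this
    rw [he']
    rw [mul_neg, ← this]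
    abel
  have hex : e * x = x * e := by
    have h2 : aeval x (pSeq n * X) = aeval x (X * pSeq n) := by rw [mul_comm]
    rw [map_mul, map_mul, aeval_X] at h2
    exact h2
  refine ⟨e, x - e, he, ?_, by abel, ?_⟩
  · show IsStronglyNilpotent (x - e)
    rw [hw]; exact ha.mul_right _
  · rw [mul_sub, sub_mul, hex]

/-- The canonical ring homomorphism between quotients by comparable congruences. -/
def quotHomOfLE {R : Type*} [Ring R] {c d : RingCon R} (h : c ≤ d) :
    c.Quotient →+* d.Quotient where
  toFun := Quotient.lift (fun x : R => ((x : d.Quotient))) (fun _ _ hab => (RingCon.eq d).mpr (h hab))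
  map_one' := rfl
  map_mul' := fun a b => Quotient.inductionOn₂ a b fun _ _ => rfl
  map_zero' := rfl
  map_add' := fun a b => Quotient.inductionOn₂ a b fun _ _ => rfl

lemma quotHomOfLE_surjective {R : Type*} [Ring R] {c d : RingCon R} (h : c ≤ d) :
    Function.Surjective (quotHomOfLE h) := fun y =>
  Quotient.inductionOn y fun x => ⟨(x : c.Quotient), rfl⟩

lemma mk'_surjective {R : Type*} [Ring R] (c : RingCon R) :
    Function.Surjective c.mk' := fun y => Quotient.inductionOn y fun x => ⟨x, rfl⟩

lemma mk'_eq_zero_iff {R : Type*} [Ring R] (I : TwoSidedIdeal R) (y : R) :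
    I.ringCon.mk' y = 0 ↔ y ∈ I := by
  show (y : I.ringCon.Quotient) = ((0 : R) : I.ringCon.Quotient) ↔ _
  rw [RingCon.eq I.ringCon]
  exact (I.mem_iff y).symm

lemma aux_sub_sq_nilpotent {S : Type*} [Ring S] (hS : StronglyPCleanRing S)
    (x : S) : IsStronglyNilpotent (x - x * x) := by
  obtain ⟨e, w, he, hw, hsum, hcomm⟩ := hS x
  have hxw : x - x * x = w * (1 - e - e - w) := by
    rw [hsum]
    have h1 : (e + w) * (e + w) = e * e + (e * w + (w * e + w * w)) := by
      rw [add_mul, mul_add, mul_add]; abel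
    rw [h1, he, hcomm, mul_sub, mul_sub, mul_sub, mul_one]
    abel
  rw [hxw]
  exact (hw : IsStronglyNilpotent w).mul_right _

/-- **Proposition 2.10.** Let `I` and `J` be two-sided ideals of a ring `R`.
The following are equivalent: (1) `R/I` and `R/J` are strongly P-clean;
(2) `R/(IJ)` is strongly P-clean; (3) `R/(I ∩ J)` is strongly P-clean. -/
theorem stronglyPCleanRing_quotient_mul_inf_tfae
    (R : Type*) [Ring R] (I J : TwoSidedIdeal R) :
    [StronglyPCleanRing I.ringCon.Quotient ∧ StronglyPCleanRing J.ringCon.Quotient,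
     StronglyPCleanRing (I.idealMul J).ringCon.Quotient,
     StronglyPCleanRing (I ⊓ J).ringCon.Quotient].TFAE := by
  tfae_have 1 → 2 := by
    rintro ⟨hI, hJ⟩
    set K := I.idealMul J with hK
    set π := K.ringCon.mk' with hπ
    intro x'
    obtain ⟨x, rfl⟩ := mk'_surjective K.ringCon x'
    apply isStronglyPClean_of_isStronglyNilpotent_sub_sq
    have hmap : π x - π x * π x = π (x - x * x) := by rw [map_sub, map_mul]
    rw [hmap]
    -- show π (x - x*x) is strongly nilpotent
    intro f hf0 hrec
    choose s hs using hrec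
    choose r hr using fun i => mk'_surjective K.ringCon (s i)
    set g : ℕ → R := fun m => Nat.rec (x - x * x) (fun i gi => gi * r i * gi) m with hg
    have key : ∀ i, π (g i) = f i := by
      intro i
      induction i with
      | zero => exact hf0.symm
      | succ i ih =>
        show π (g i * r i * g i) = _
        rw [map_mul, map_mul, ih, hr i, ← hs i]
    -- images in R/I eventually vanish
    have hInil : IsStronglyNilpotent (I.ringCon.mk' (x - x * x)) := by
      have := aux_sub_sq_nilpotent hI (I.ringCon.mk' x)
      rwa [← map_mul, ← map_sub] at this
    obtain ⟨nI, hnI⟩ := hInil (fun i => I.ringCon.mk' (g i)) rfl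
      (fun i => ⟨I.ringCon.mk' (r i), by
        show I.ringCon.mk' (g i * r i * g i) = _
        rw [map_mul, map_mul]⟩)
    have hJnil : IsStronglyNilpotent (J.ringCon.mk' (x - x * x)) := by
      have := aux_sub_sq_nilpotent hJ (J.ringCon.mk' x)
      rwa [← map_mul, ← map_sub] at this
    obtain ⟨nJ, hnJ⟩ := hJnil (fun i => J.ringCon.mk' (g i)) rfl
      (fun i => ⟨J.ringCon.mk' (r i), by
        show J.ringCon.mk' (g i * r i * g i) = _
        rw [map_mul, map_mul]⟩)
    have hImem : ∀ k, nI ≤ k → g k ∈ I := by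
      intro k hk
      induction k, hk using Nat.le_induction with
      | base => exact (mk'_eq_zero_iff I (g nI)).mp hnI
      | succ k _ ih =>
        show g k * r k * g k ∈ I
        exact I.mul_mem_right _ _ (I.mul_mem_right _ _ ih)
    have hJmem : ∀ k, nJ ≤ k → g k ∈ J := by
      intro k hk
      induction k, hk using Nat.le_induction with
      | base => exact (mk'_eq_zero_iff J (g nJ)).mp hnJ
      | succ k _ ih =>
        show g k * r k * g k ∈ J
        exact J.mul_mem_left _ _ ih
    set N := max nI nJ with hN
    refine ⟨N + 1, ?_⟩
    rw [← key (N + 1)]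
    apply (mk'_eq_zero_iff K (g (N + 1))).mpr
    show g N * r N * g N ∈ K
    exact TwoSidedIdeal.subset_span
      ⟨g N * r N, I.mul_mem_right _ _ (hImem N (le_max_left _ _)), g N,
        hJmem N (le_max_right _ _), rfl⟩
  tfae_have 2 → 3 := by
    intro h
    have hle : I.idealMul J ≤ I ⊓ J := by
      intro x hx
      refine TwoSidedIdeal.mem_span_iff.mp hx (I ⊓ J) ?_
      rintro z ⟨a, haI, b, hbJ, rfl⟩
      rw [SetLike.mem_coe, TwoSidedIdeal.mem_inf]
      exact ⟨I.mul_mem_right _ _ haI, J.mul_mem_left _ _ hbJ⟩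
    exact StronglyPCleanRing.of_surjective _
      (quotHomOfLE_surjective (TwoSidedIdeal.ringCon_le_iff.mp hle)) h
  tfae_have 3 → 1 := by
    intro h
    constructor
    · exact StronglyPCleanRing.of_surjective _
        (quotHomOfLE_surjective (TwoSidedIdeal.ringCon_le_iff.mp (inf_le_left (b := J)))) h
    · exact StronglyPCleanRing.of_surjective _
        (quotHomOfLE_surjective (TwoSidedIdeal.ringCon_le_iff.mp (inf_le_right (a := I)))) h
  tfae_finish
end

section
/- Every uniquely P-clean ring is uniquely clean: if R is uniquely P-clean, then every element of R has a unique representation as the sum of an idempotent and a unit. -/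
/-- A ring is uniquely P-clean if every element `x` admits a unique idempotent
`e` with `x - e ∈ P(R)`. -/
def UniquelyPCleanRing (R : Type*) [Ring R] : Prop :=
  ∀ x : R, ∃! e : R, IsIdempotentElem e ∧ x - e ∈ primeRadical R

/-- A ring is uniquely clean if every element can be written in exactly one way
as the sum of an idempotent and a unit. -/
def UniquelyCleanRing (R : Type*) [Ring R] : Prop :=
  ∀ x : R, ∃! p : R × R, IsIdempotentElem p.1 ∧ IsUnit p.2 ∧ x = p.1 + p.2

lemma IsStronglyNilpotent.isNilpotent {R : Type*} [Ring R] {a : R}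
    (ha : IsStronglyNilpotent a) : IsNilpotent a := by
  obtain ⟨n, hn⟩ := ha (fun n => a ^ (2 ^ n)) (by simp)
    (fun i => ⟨1, by show a ^ 2 ^ (i+1) = _; rw [mul_one, ← pow_add, pow_succ, mul_two]⟩)
  exact ⟨2 ^ n, hn⟩

lemma IsStronglyNilpotent.mul_left {R : Type*} [Ring R] {a : R}
    (ha : IsStronglyNilpotent a) (r : R) : IsStronglyNilpotent (r * a) := by
  intro f hf0 hf
  choose s hs using hf
  let g : ℕ → R := fun n => Nat.rec a (fun i gi => gi * (s i * r) * gi) n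
  have key : ∀ n, f n = r * g n := by
    intro n
    induction n with
    | zero => simpa [g] using hf0
    | succ i ih =>
      have : g (i + 1) = g i * (s i * r) * g i := rfl
      rw [this, hs i, ih]
      noncomm_ring
  obtain ⟨n, hn⟩ := ha g rfl (fun i => ⟨s i * r, rfl⟩)
  exact ⟨n, by rw [key, hn, mul_zero]⟩

lemma unit_sub_one_mem {R : Type*} [Ring R] (h : UniquelyPCleanRing R)
    {u : R} (hu : IsUnit u) : u - 1 ∈ primeRadical R := by
  obtain ⟨e, ⟨he, hp⟩, _⟩ := h u
  obtain ⟨v, rfl⟩ := hu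
  have hnil : IsNilpotent ((↑v⁻¹ : R) * (↑v - e)) :=
    (IsStronglyNilpotent.mul_left hp _).isNilpotent
  have h1 : IsUnit (1 - (↑v⁻¹ : R) * (↑v - e)) := hnil.isUnit_one_sub
  have he' : (e : R) = ↑v * (1 - ↑v⁻¹ * (↑v - e)) := by
    rw [mul_sub, mul_one, ← mul_assoc, Units.mul_inv, one_mul]
    abel
  have heu : IsUnit e := he' ▸ (v.isUnit.mul h1)
  have he1 : e = 1 := heu.mul_left_cancel (by rw [he, mul_one])
  rw [← he1]
  exact hp

/-- **Corollary 2.11.** Every uniquely P-clean ring is uniquely clean. -/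
theorem uniquelyCleanRing_of_uniquelyPCleanRing (R : Type*) [Ring R]
    (h : UniquelyPCleanRing R) : UniquelyCleanRing R := by
  intro x
  obtain ⟨e, ⟨he, hp⟩, huniq⟩ := h (x - 1)
  refine ⟨(e, x - e), ⟨he, ?_, show x = e + (x - e) by abel⟩, ?_⟩
  · have hx : x - e = 1 + (x - 1 - e) := by abel
    rw [hx]
    exact hp.isNilpotent.isUnit_one_add
  · rintro ⟨f, v⟩ ⟨hf, hv, hx⟩
    have hmem : x - 1 - f ∈ primeRadical R := by
      have : x - 1 - f = v - 1 := by rw [hx]; abel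
      rw [this]
      exact unit_sub_one_mem h hv
    have hfe : f = e := huniq f ⟨hf, hmem⟩
    have hve : v = x - e := by rw [hx, hfe]; abel
    simp [hfe, hve]
end
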